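/- arXiv:1805.11316 — 2 statements merged into one kernel-verified Lean document; each statement's English description precedes it below -/
import Mathlib

section
/- Let p = 2 and let (f_m)_{m∈ℕ} be a Bessel sequence in the Hilbert space L²(I), i.e., there exists B > 0 such that ∑_m |⟨g, f_m⟩|² ≤ B‖g‖₂² for all g ∈ L²(I). Then (f_m *_T 0)_{m∈ℕ} is also a Bessel sequence in L²(I): there exists B' > 0 such that ∑_m |⟨f, f_m *_T 0⟩|² ≤ B'‖f‖₂² for all f ∈ L²(I). -/
open MeasureTheory ENNReal

noncomputable section

/-- The inverse of the increasing affine map `L n` sending `[x 0, x N]` onto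
`[x n, x (n+1)]` (so `L n (x 0) = x n.castSucc` and `L n (x N) = x n.succ`). -/
def Linv {N : ℕ} (x : Fin (N + 1) → ℝ) (n : Fin N) (y : ℝ) : ℝ :=
  x 0 + (y - x n.castSucc) * (x (Fin.last N) - x 0) / (x n.succ - x n.castSucc)

/-- The subinterval `I n` of the partition: `[x 0, x 1]` for `n = 0` and
`(x n, x (n+1)]` otherwise. -/
def subInt {N : ℕ} (x : Fin (N + 1) → ℝ) (n : Fin N) : Set ℝ :=
  if n.val = 0 then Set.Icc (x n.castSucc) (x n.succ)
  else Set.Ioc (x n.castSucc) (x n.succ)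

/-- `h` is the image of `g` under the Read–Bajraktarević operator `T_{f,b}` with
scale functions `α`, almost everywhere: on each `I n`,
`h = f + (α n ∘ Lₙ⁻¹) · ((g - b) ∘ Lₙ⁻¹)`. -/
def RBEq {N : ℕ} (μ : Measure ℝ) (x : Fin (N + 1) → ℝ) (α : Fin N → ℝ → ℝ)
    (f b g h : ℝ → ℝ) : Prop :=
  ∀ n : Fin N, ∀ᵐ t ∂μ, t ∈ subInt x n →
    h t = f t + α n (Linv x n t) * (g (Linv x n t) - b (Linv x n t))

/-- `h` satisfies the self-referential equation of `T_{f,b}`, i.e. `h` is a fixed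
point of `T_{f,b}`; `h` is then the fractal convolution `f *_T b`. -/
def SelfRef {N : ℕ} (μ : Measure ℝ) (x : Fin (N + 1) → ℝ) (α : Fin N → ℝ → ℝ)
    (f b h : ℝ → ℝ) : Prop :=
  RBEq μ x α f b h h

namespace FCAux

variable {N : ℕ} {x : Fin (N + 1) → ℝ}

/-- slope of `Linv`. -/
def slope (x : Fin (N + 1) → ℝ) (n : Fin N) : ℝ :=
  (x (Fin.last N) - x 0) / (x n.succ - x n.castSucc)

/-- contraction ratio `aₙ`. -/
def ratio (x : Fin (N + 1) → ℝ) (n : Fin N) : ℝ :=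
  (x n.succ - x n.castSucc) / (x (Fin.last N) - x 0)

lemma sub_pos_of_strictMono (hx : StrictMono x) (n : Fin N) :
    0 < x n.succ - x n.castSucc :=
  sub_pos.2 (hx (Fin.castSucc_lt_succ (i := n)))

lemma last_sub_pos (hx : StrictMono x) (hN : 0 < N) :
    0 < x (Fin.last N) - x 0 := by
  refine sub_pos.2 (hx ?_)
  exact Fin.lt_iff_val_lt_val.2 (by simpa using hN)

lemma slope_pos (hx : StrictMono x) (hN : 0 < N) (n : Fin N) : 0 < slope x n :=
  div_pos (last_sub_pos hx hN) (sub_pos_of_strictMono hx n)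

lemma ratio_pos (hx : StrictMono x) (hN : 0 < N) (n : Fin N) : 0 < ratio x n :=
  div_pos (sub_pos_of_strictMono hx n) (last_sub_pos hx hN)

lemma Linv_eq (n : Fin N) (t : ℝ) :
    Linv x n t = (x 0 - x n.castSucc * slope x n) + slope x n * t := by
  simp only [Linv, slope]; ring

lemma slope_mul (hx : StrictMono x) (n : Fin N) :
    slope x n * (x n.succ - x n.castSucc) = x (Fin.last N) - x 0 := by
  rw [slope, div_mul_cancel₀]
  exact (sub_pos_of_strictMono hx n).ne'

lemma sum_ratio (hx : StrictMono x) (hN : 0 < N) :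
    ∑ n : Fin N, ratio x n = 1 := by
  have key : ∑ n : Fin N, (x n.succ - x n.castSucc) = x (Fin.last N) - x 0 := by
    classical
    set f : ℕ → ℝ := fun i => if h : i ≤ N then x ⟨i, Nat.lt_succ_of_le h⟩ else 0 with hf
    have h1 : ∀ n : Fin N, x n.succ - x n.castSucc = f (n.val + 1) - f n.val := by
      intro n
      have h2 : n.val + 1 ≤ N := n.isLt
      have h3 : n.val ≤ N := le_of_lt n.isLt
      simp only [hf, dif_pos h2, dif_pos h3]
      congr 1
    calc ∑ n : Fin N, (x n.succ - x n.castSucc)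
        = ∑ n : Fin N, (f (n.val + 1) - f n.val) := by
          exact Finset.sum_congr rfl fun n _ => h1 n
      _ = ∑ i ∈ Finset.range N, (f (i + 1) - f i) := by
          exact Fin.sum_univ_eq_sum_range (fun i => f (i + 1) - f i) N
      _ = f N - f 0 := Finset.sum_range_sub f N
      _ = x (Fin.last N) - x 0 := by
          simp only [hf, dif_pos le_rfl, dif_pos (Nat.zero_le N)]
          congr 1
  simp only [ratio]
  rw [← Finset.sum_div, key, div_self (last_sub_pos hx hN).ne']

lemma subInt_subset (hx : StrictMono x) (n : Fin N) :
    subInt x n ⊆ Set.Icc (x 0) (x (Fin.last N)) := by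
  have h1 : x 0 ≤ x n.castSucc := hx.monotone (Fin.zero_le _)
  have h2 : x n.succ ≤ x (Fin.last N) := hx.monotone (Fin.le_last _)
  unfold subInt
  split
  · exact Set.Icc_subset_Icc h1 h2
  · exact Set.Ioc_subset_Icc_self.trans (Set.Icc_subset_Icc h1 h2)

lemma measurableSet_subInt (n : Fin N) : MeasurableSet (subInt x n) := by
  unfold subInt; split
  · exact measurableSet_Icc
  · exact measurableSet_Ioc

lemma subInt_eq_of_mem (hx : StrictMono x) {m n : Fin N} {t : ℝ}
    (hm : t ∈ subInt x m) (hn : t ∈ subInt x n) : m = n := by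
  by_contra hne
  -- wlog m < n
  have key : ∀ m n : Fin N, m < n → t ∈ subInt x m → t ∈ subInt x n → False := by
    intro m n hlt hm hn
    have h1 : t ≤ x m.succ := by
      unfold subInt at hm; split at hm
      · exact hm.2
      · exact hm.2
    have h2 : x n.castSucc < t := by
      have hn0 : n.val ≠ 0 := by
        intro h0
        exact absurd (Fin.lt_iff_val_lt_val.1 hlt) (by omega)
      unfold subInt at hn
      rw [if_neg hn0] at hn
      exact hn.1
    have h3 : x m.succ ≤ x n.castSucc := by
      refine hx.monotone ?_
      have := Fin.lt_iff_val_lt_val.1 hlt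
      simp [Fin.le_iff_val_le_val]
      omega
    linarith
  rcases lt_or_gt_of_ne hne with h | h
  · exact key m n h hm hn
  · exact key n m h hn hm

lemma mem_subInt_of_mem_Icc (hx : StrictMono x) (hN : 0 < N) {t : ℝ}
    (ht : t ∈ Set.Icc (x 0) (x (Fin.last N))) : ∃ n : Fin N, t ∈ subInt x n := by
  classical
  by_cases h1 : t ≤ x (⟨0, hN⟩ : Fin N).succ
  · refine ⟨⟨0, hN⟩, ?_⟩
    unfold subInt
    rw [if_pos rfl]
    exact ⟨le_trans (by simpa using le_rfl : x 0 ≤ x 0) (by simpa [Fin.castSucc] using ht.1), h1⟩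
  · push_neg at h1
    -- consider the greatest k with x k < t
    set s : Finset (Fin (N + 1)) := Finset.univ.filter (fun i => x i < t) with hs
    have hsne : s.Nonempty := by
      refine ⟨0, ?_⟩
      simp only [hs, Finset.mem_filter, Finset.mem_univ, true_and]
      calc x 0 ≤ x (⟨0, hN⟩ : Fin N).succ := hx.monotone (Fin.zero_le _)
        _ < t := h1
    set k := s.max' hsne with hk
    have hkmem : x k < t := by
      have := s.max'_mem hsne
      simpa [hs] using this
    have hklt : k.val < N := by
      rcases lt_or_eq_of_le (Nat.lt_succ_iff.1 k.isLt) with h | h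
      · exact h
      · exfalso
        have : k = Fin.last N := Fin.ext h
        rw [this] at hkmem
        exact absurd ht.2 (not_le.2 hkmem)
    refine ⟨⟨k.val, hklt⟩, ?_⟩
    have hcast : (⟨k.val, hklt⟩ : Fin N).castSucc = k := rfl
    have hle : t ≤ x (⟨k.val, hklt⟩ : Fin N).succ := by
      by_contra hc
      push_neg at hc
      have hmem : (⟨k.val, hklt⟩ : Fin N).succ ∈ s := by
        simp only [hs, Finset.mem_filter, Finset.mem_univ, true_and]
        exact hc
      have := s.le_max' _ hmem
      rw [← hk] at this
      have h2 : k.val < ((⟨k.val, hklt⟩ : Fin N).succ : Fin (N+1)).val := by simp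
      exact absurd (Fin.le_iff_val_le_val.1 this) (by omega)
    unfold subInt
    split
    · refine ⟨le_of_lt ?_, hle⟩
      rw [hcast]; exact hkmem
    · refine ⟨?_, hle⟩
      rw [hcast]; exact hkmem

/-- The image interval of `subInt x n` under `Linv x n`. -/
def Jset (x : Fin (N + 1) → ℝ) (n : Fin N) : Set ℝ :=
  if n.val = 0 then Set.Icc (x 0) (x (Fin.last N))
  else Set.Ioc (x 0) (x (Fin.last N))

lemma measurableSet_Jset (n : Fin N) : MeasurableSet (Jset x n) := by
  unfold Jset; split
  · exact measurableSet_Icc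
  · exact measurableSet_Ioc

lemma Linv_preimage (hx : StrictMono x) (hN : 0 < N) (n : Fin N) :
    Linv x n ⁻¹' (Jset x n) = subInt x n := by
  have hc : 0 < slope x n := slope_pos hx hN n
  have h1 : ∀ t : ℝ, Linv x n t - x 0 = slope x n * (t - x n.castSucc) := by
    intro t; rw [Linv_eq]; ring
  have h2 : ∀ t : ℝ, x (Fin.last N) - Linv x n t
      = slope x n * (x n.succ - t) := by
    intro t
    have := slope_mul hx n
    rw [Linv_eq]; nlinarith [this]
  have e1 : ∀ t : ℝ, x 0 ≤ Linv x n t ↔ x n.castSucc ≤ t := by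
    intro t; constructor
    · intro h; by_contra hc'; push_neg at hc'; nlinarith [h1 t]
    · intro h; nlinarith [h1 t, mul_nonneg hc.le (sub_nonneg.2 h)]
  have e1' : ∀ t : ℝ, x 0 < Linv x n t ↔ x n.castSucc < t := by
    intro t; constructor
    · intro h; by_contra hc'; push_neg at hc'
      nlinarith [h1 t, mul_nonneg hc.le (sub_nonneg.2 hc')]
    · intro h; nlinarith [h1 t, mul_pos hc (sub_pos.2 h)]
  have e2 : ∀ t : ℝ, Linv x n t ≤ x (Fin.last N) ↔ t ≤ x n.succ := by
    intro t; constructor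
    · intro h; by_contra hc'; push_neg at hc'; nlinarith [h2 t]
    · intro h; nlinarith [h2 t, mul_nonneg hc.le (sub_nonneg.2 h)]
  ext t
  unfold Jset subInt
  split
  · simp only [Set.mem_preimage, Set.mem_Icc, e1 t, e2 t]
  · simp only [Set.mem_preimage, Set.mem_Ioc, e1' t, e2 t]

lemma measurable_Linv (n : Fin N) : Measurable (Linv x n) := by
  have : Linv x n = fun t => (x 0 - x n.castSucc * slope x n) + slope x n * t :=
    funext fun t => Linv_eq n t
  rw [this]
  exact (measurable_id.const_mul _).const_add _

lemma map_Linv (hx : StrictMono x) (hN : 0 < N) (n : Fin N) :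
    Measure.map (Linv x n) (volume.restrict (subInt x n))
      = ENNReal.ofReal (ratio x n)
        • volume.restrict (Set.Icc (x 0) (x (Fin.last N))) := by
  have hc : 0 < slope x n := slope_pos hx hN n
  have hmapvol : Measure.map (Linv x n) volume
      = ENNReal.ofReal (ratio x n) • volume := by
    have hcomp : Linv x n = (fun t => (x 0 - x n.castSucc * slope x n) + t)
        ∘ (fun t => slope x n * t) := funext fun t => by
      simp only [Function.comp_apply]; exact Linv_eq n t
    rw [hcomp, ← Measure.map_map (measurable_const_add _) (measurable_const_mul _),
      Real.map_volume_mul_left hc.ne', Measure.map_smul,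
      MeasureTheory.map_add_left_eq_self volume _]
    congr 1
    rw [abs_of_pos (inv_pos.2 hc)]
    congr 1
    rw [slope, inv_div]
    rfl
  calc Measure.map (Linv x n) (volume.restrict (subInt x n))
      = Measure.map (Linv x n) (volume.restrict (Linv x n ⁻¹' Jset x n)) := by
        rw [Linv_preimage hx hN n]
    _ = (Measure.map (Linv x n) volume).restrict (Jset x n) :=
        (Measure.restrict_map (measurable_Linv n) (measurableSet_Jset n)).symm
    _ = ENNReal.ofReal (ratio x n) • volume.restrict (Jset x n) := by
        rw [hmapvol, Measure.restrict_smul]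
    _ = ENNReal.ofReal (ratio x n)
          • volume.restrict (Set.Icc (x 0) (x (Fin.last N))) := by
        unfold Jset
        split
        · rfl
        · rw [Measure.restrict_congr_set Ioc_ae_eq_Icc]

/-- The function underlying the scaling operator `S`. -/
def opFun (x : Fin (N + 1) → ℝ) (αf : Fin N → ℝ → ℝ) (g : ℝ → ℝ) : ℝ → ℝ :=
  fun t => ∑ n : Fin N,
    (subInt x n).indicator (fun s => αf n (Linv x n s) * g (Linv x n s)) t

lemma opFun_eq_on (hx : StrictMono x) {αf : Fin N → ℝ → ℝ} {g : ℝ → ℝ}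
    {n : Fin N} {t : ℝ} (ht : t ∈ subInt x n) :
    opFun x αf g t = αf n (Linv x n t) * g (Linv x n t) := by
  unfold opFun
  rw [Finset.sum_eq_single n]
  · rw [Set.indicator_of_mem ht]
  · intro m _ hm
    rw [Set.indicator_of_notMem]
    exact fun hmem => hm (subInt_eq_of_mem hx hmem ht)
  · simp

lemma opFun_add (αf : Fin N → ℝ → ℝ) (g₁ g₂ : ℝ → ℝ) :
    opFun x αf (g₁ + g₂) = fun t => opFun x αf g₁ t + opFun x αf g₂ t := by
  funext t
  unfold opFun
  rw [← Finset.sum_add_distrib]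
  refine Finset.sum_congr rfl fun n _ => ?_
  by_cases h : t ∈ subInt x n
  · simp only [Set.indicator_of_mem h, Pi.add_apply]; ring
  · simp only [Set.indicator_of_notMem h, add_zero]

lemma opFun_smul (αf : Fin N → ℝ → ℝ) (c : ℝ) (g : ℝ → ℝ) :
    opFun x αf (c • g) = fun t => c * opFun x αf g t := by
  funext t
  unfold opFun
  rw [Finset.mul_sum]
  refine Finset.sum_congr rfl fun n _ => ?_
  by_cases h : t ∈ subInt x n
  · simp only [Set.indicator_of_mem h, Pi.smul_apply, smul_eq_mul]; ring
  · simp only [Set.indicator_of_notMem h, mul_zero]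

set_option maxHeartbeats 1000000 in
theorem exists_S (hN : 0 < N) (hx : StrictMono x)
    (μ : Measure ℝ) (hμ : μ = volume.restrict (Set.Icc (x 0) (x (Fin.last N))))
    (α : Fin N → Lp ℝ ∞ μ) (Λ : ℝ) (hΛ0 : 0 ≤ Λ) (hΛn : ∀ n, ‖α n‖ ≤ Λ) :
    ∃ S : Lp ℝ 2 μ →L[ℝ] Lp ℝ 2 μ,
      (∀ g : Lp ℝ 2 μ, ‖S g‖ ≤ Λ * ‖g‖) ∧
      ∀ (f g : Lp ℝ 2 μ), SelfRef μ x (fun n => ⇑(α n)) ⇑f ⇑(0 : Lp ℝ 2 μ) ⇑g →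
        g = f + S g := by
  classical
  set αf : Fin N → ℝ → ℝ := fun n => ⇑(α n) with hαf
  -- basic measure facts
  have hrestr : ∀ n : Fin N, μ.restrict (subInt x n) = volume.restrict (subInt x n) := by
    intro n
    rw [hμ, Measure.restrict_restrict (measurableSet_subInt n),
      Set.inter_eq_self_of_subset_left (subInt_subset hx n)]
  have hmap : ∀ n : Fin N, Measure.map (Linv x n) (μ.restrict (subInt x n))
      = ENNReal.ofReal (ratio x n) • μ := by
    intro n
    rw [hrestr n, map_Linv hx hN n, ← hμ]
  have hqmp : ∀ n : Fin N,
      Measure.QuasiMeasurePreserving (Linv x n) (μ.restrict (subInt x n)) μ := by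
    intro n
    exact Measure.QuasiMeasurePreserving.mk (measurable_Linv n)
      ((hmap n) ▸ Measure.smul_absolutelyContinuous (μ := μ) (c := ENNReal.ofReal (ratio x n)))
  -- the essential bound on α
  have haeΛ : ∀ n : Fin N,
      ∀ᵐ t ∂(μ.restrict (subInt x n)), |αf n (Linv x n t)| ≤ Λ := by
    intro n
    refine Measure.QuasiMeasurePreserving.ae (hqmp n) (p := fun y => |αf n y| ≤ Λ) ?_
    have hfin : eLpNormEssSup (⇑(α n)) μ ≠ ∞ := by
      have := Lp.eLpNorm_ne_top (α n)
      rwa [eLpNorm_exponent_top] at this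
    filter_upwards [ae_le_eLpNormEssSup (f := ⇑(α n)) (μ := μ)] with y hy
    have h1 : ‖(α n) y‖ ≤ ‖α n‖ := by
      rw [Lp.norm_def, eLpNorm_exponent_top]
      calc ‖(α n) y‖ = ((‖(α n) y‖₊ : ℝ≥0∞)).toReal := by simp
        _ ≤ (eLpNormEssSup (⇑(α n)) μ).toReal := ENNReal.toReal_mono hfin hy
    calc |αf n y| = ‖(α n) y‖ := (Real.norm_eq_abs _).symm
      _ ≤ ‖α n‖ := h1
      _ ≤ Λ := hΛn n
  -- covering / partition
  have hIcc : Set.Icc (x 0) (x (Fin.last N)) = ⋃ n : Fin N, subInt x n := by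
    ext t; constructor
    · exact fun ht => Set.mem_iUnion.2 (mem_subInt_of_mem_Icc hx hN ht)
    · intro ht
      obtain ⟨n, hn⟩ := Set.mem_iUnion.1 ht
      exact subInt_subset hx n hn
  have haecov : ∀ {P : ℝ → Prop},
      (∀ n : Fin N, ∀ᵐ t ∂(μ.restrict (subInt x n)), P t) → ∀ᵐ t ∂μ, P t := by
    intro P h
    have h1 : ∀ n : Fin N, ∀ᵐ t ∂μ, t ∈ subInt x n → P t := fun n =>
      (ae_restrict_iff' (measurableSet_subInt n)).1 (h n)
    have h2 : ∀ᵐ t ∂μ, t ∈ Set.Icc (x 0) (x (Fin.last N)) := by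
      rw [hμ]; exact ae_restrict_mem measurableSet_Icc
    have h3 : ∀ᵐ t ∂μ, ∀ n : Fin N, t ∈ subInt x n → P t := ae_all_iff.2 h1
    filter_upwards [h2, h3] with t ht hall
    obtain ⟨n, hn⟩ := mem_subInt_of_mem_Icc hx hN ht
    exact hall n hn
  have hdisj : Pairwise (Function.onFun Disjoint fun n : Fin N => subInt x n) := by
    intro m n hmn
    exact Set.disjoint_left.2 fun t hm hn => hmn (subInt_eq_of_mem hx hm hn)
  have hmeq : μ = Measure.sum (fun n : Fin N => μ.restrict (subInt x n)) := by
    have h1 : volume.restrict (Set.Icc (x 0) (x (Fin.last N)))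
        = Measure.sum (fun n : Fin N => volume.restrict (subInt x n)) := by
      rw [hIcc]
      exact Measure.restrict_iUnion hdisj (fun n => measurableSet_subInt n)
    conv_lhs => rw [hμ, h1]
    congr 1
    funext n
    exact (hrestr n).symm
  have hdecomp : ∀ F : ℝ → ℝ≥0∞,
      ∫⁻ t, F t ∂μ = ∑ n : Fin N, ∫⁻ t, F t ∂(μ.restrict (subInt x n)) := by
    intro F
    conv_lhs => rw [hmeq]
    rw [lintegral_sum_measure, tsum_fintype]
  -- measurability
  have hAESM : ∀ g : ℝ → ℝ, AEStronglyMeasurable g μ →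
      AEStronglyMeasurable (opFun x αf g) μ := by
    intro g hg
    unfold opFun
    refine Finset.aestronglyMeasurable_fun_sum _ fun n _ => ?_
    refine (aestronglyMeasurable_indicator_iff (measurableSet_subInt n)).2 ?_
    exact ((Lp.aestronglyMeasurable (α n)).comp_quasiMeasurePreserving (hqmp n)).mul
      (hg.comp_quasiMeasurePreserving (hqmp n))
  -- congruence
  have hcongr : ∀ g g' : ℝ → ℝ, AEStronglyMeasurable g μ → g =ᵐ[μ] g' →
      opFun x αf g =ᵐ[μ] opFun x αf g' := by
    intro g g' _ hgg'
    refine haecov fun n => ?_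
    filter_upwards [ae_restrict_mem (measurableSet_subInt n), (hqmp n).ae_eq hgg']
      with t ht heq
    rw [opFun_eq_on hx ht, opFun_eq_on hx ht]
    simp only [Function.comp_apply] at heq
    rw [heq]
  -- key norm estimate
  have hkey : ∀ g : ℝ → ℝ, AEStronglyMeasurable g μ →
      eLpNorm (opFun x αf g) 2 μ ≤ ENNReal.ofReal Λ * eLpNorm g 2 μ := by
    intro g hg
    have h2ne : (2 : ℝ≥0∞) ≠ 0 := by norm_num
    have h2top : (2 : ℝ≥0∞) ≠ ∞ := by norm_num
    rw [eLpNorm_eq_lintegral_rpow_enorm_toReal h2ne h2top,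
      eLpNorm_eq_lintegral_rpow_enorm_toReal h2ne h2top]
    simp only [enorm_eq_nnnorm]
    have h2r : (2 : ℝ≥0∞).toReal = (2 : ℝ) := by norm_num
    rw [h2r]
    set Qg := ∫⁻ t, (‖g t‖₊ : ℝ≥0∞) ^ (2 : ℝ) ∂μ with hQg
    have hΛtop : (ENNReal.ofReal Λ) ^ (2 : ℝ) ≠ ∞ :=
      ENNReal.rpow_ne_top_of_nonneg (by norm_num) ENNReal.ofReal_ne_top
    have hpiece : ∀ n : Fin N,
        ∫⁻ t, (‖opFun x αf g t‖₊ : ℝ≥0∞) ^ (2 : ℝ) ∂(μ.restrict (subInt x n))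
          ≤ (ENNReal.ofReal Λ) ^ (2 : ℝ)
            * (ENNReal.ofReal (ratio x n) * Qg) := by
      intro n
      have e1 : ∫⁻ t, (‖opFun x αf g t‖₊ : ℝ≥0∞) ^ (2 : ℝ) ∂(μ.restrict (subInt x n))
          = ∫⁻ t, (‖αf n (Linv x n t) * g (Linv x n t)‖₊ : ℝ≥0∞) ^ (2 : ℝ)
              ∂(μ.restrict (subInt x n)) := by
        refine lintegral_congr_ae ?_
        filter_upwards [ae_restrict_mem (measurableSet_subInt n)] with t ht
        rw [opFun_eq_on hx ht]
      have e2 : ∫⁻ t, (‖αf n (Linv x n t) * g (Linv x n t)‖₊ : ℝ≥0∞) ^ (2 : ℝ)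
              ∂(μ.restrict (subInt x n))
          ≤ (ENNReal.ofReal Λ) ^ (2 : ℝ)
            * ∫⁻ t, (‖g (Linv x n t)‖₊ : ℝ≥0∞) ^ (2 : ℝ) ∂(μ.restrict (subInt x n)) := by
        rw [← lintegral_const_mul' _ _ hΛtop]
        refine lintegral_mono_ae ?_
        filter_upwards [haeΛ n] with t ht
        have hα : (‖αf n (Linv x n t)‖₊ : ℝ≥0∞) ≤ ENNReal.ofReal Λ := by
          rw [← enorm_eq_nnnorm, ← ofReal_norm]
          exact ENNReal.ofReal_le_ofReal (by rwa [Real.norm_eq_abs])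
        have hnn : (‖αf n (Linv x n t) * g (Linv x n t)‖₊ : ℝ≥0∞)
            ≤ ENNReal.ofReal Λ * (‖g (Linv x n t)‖₊ : ℝ≥0∞) := by
          rw [nnnorm_mul, ENNReal.coe_mul]
          gcongr
        calc (‖αf n (Linv x n t) * g (Linv x n t)‖₊ : ℝ≥0∞) ^ (2 : ℝ)
            ≤ (ENNReal.ofReal Λ * (‖g (Linv x n t)‖₊ : ℝ≥0∞)) ^ (2 : ℝ) :=
              ENNReal.rpow_le_rpow hnn (by norm_num)
          _ = (ENNReal.ofReal Λ) ^ (2 : ℝ) * (‖g (Linv x n t)‖₊ : ℝ≥0∞) ^ (2 : ℝ) :=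
              ENNReal.mul_rpow_of_nonneg _ _ (by norm_num)
      have e3 : ∫⁻ t, (‖g (Linv x n t)‖₊ : ℝ≥0∞) ^ (2 : ℝ) ∂(μ.restrict (subInt x n))
          = ENNReal.ofReal (ratio x n) * Qg := by
        have hF : AEMeasurable (fun y => (‖g y‖₊ : ℝ≥0∞) ^ (2 : ℝ))
            (Measure.map (Linv x n) (μ.restrict (subInt x n))) := by
          rw [hmap n]
          exact (hg.aemeasurable.nnnorm.coe_nnreal_ennreal.pow_const _).smul_measure _
        calc ∫⁻ t, (‖g (Linv x n t)‖₊ : ℝ≥0∞) ^ (2 : ℝ) ∂(μ.restrict (subInt x n))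
            = ∫⁻ y, (‖g y‖₊ : ℝ≥0∞) ^ (2 : ℝ)
                ∂(Measure.map (Linv x n) (μ.restrict (subInt x n))) :=
              (lintegral_map' hF (hqmp n).aemeasurable).symm
          _ = ∫⁻ y, (‖g y‖₊ : ℝ≥0∞) ^ (2 : ℝ) ∂(ENNReal.ofReal (ratio x n) • μ) := by
              rw [hmap n]
          _ = ENNReal.ofReal (ratio x n) * Qg := by
              rw [lintegral_smul_measure, smul_eq_mul]
      calc ∫⁻ t, (‖opFun x αf g t‖₊ : ℝ≥0∞) ^ (2 : ℝ) ∂(μ.restrict (subInt x n))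
          ≤ (ENNReal.ofReal Λ) ^ (2 : ℝ)
            * ∫⁻ t, (‖g (Linv x n t)‖₊ : ℝ≥0∞) ^ (2 : ℝ) ∂(μ.restrict (subInt x n)) := by
            rw [e1]; exact e2
        _ = (ENNReal.ofReal Λ) ^ (2 : ℝ) * (ENNReal.ofReal (ratio x n) * Qg) := by
            rw [e3]
    have hstep : ∫⁻ t, (‖opFun x αf g t‖₊ : ℝ≥0∞) ^ (2 : ℝ) ∂μ
        ≤ (ENNReal.ofReal Λ) ^ (2 : ℝ) * Qg := by
      rw [hdecomp]
      calc ∑ n : Fin N, ∫⁻ t, (‖opFun x αf g t‖₊ : ℝ≥0∞) ^ (2 : ℝ)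
              ∂(μ.restrict (subInt x n))
          ≤ ∑ n : Fin N, (ENNReal.ofReal Λ) ^ (2 : ℝ)
              * (ENNReal.ofReal (ratio x n) * Qg) :=
            Finset.sum_le_sum fun n _ => hpiece n
        _ = (ENNReal.ofReal Λ) ^ (2 : ℝ) * Qg := by
            rw [← Finset.mul_sum]
            congr 1
            rw [← Finset.sum_mul,
              ← ENNReal.ofReal_sum_of_nonneg (fun n _ => (ratio_pos hx hN n).le),
              sum_ratio hx hN, ENNReal.ofReal_one, one_mul]
    calc (∫⁻ t, (‖opFun x αf g t‖₊ : ℝ≥0∞) ^ (2 : ℝ) ∂μ) ^ (1 / (2:ℝ))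
        ≤ ((ENNReal.ofReal Λ) ^ (2 : ℝ) * Qg) ^ (1 / (2:ℝ)) :=
          ENNReal.rpow_le_rpow hstep (by norm_num)
      _ = ENNReal.ofReal Λ * Qg ^ (1 / (2:ℝ)) := by
          rw [ENNReal.mul_rpow_of_nonneg _ _ (by norm_num : (0:ℝ) ≤ 1/2),
            ← ENNReal.rpow_mul]
          norm_num
  -- membership
  have hmem : ∀ g : Lp ℝ 2 μ, MemLp (opFun x αf ⇑g) 2 μ := by
    intro g
    refine ⟨hAESM _ (Lp.aestronglyMeasurable g), ?_⟩
    calc eLpNorm (opFun x αf ⇑g) 2 μ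
        ≤ ENNReal.ofReal Λ * eLpNorm (⇑g) 2 μ := hkey _ (Lp.aestronglyMeasurable g)
      _ < ∞ := ENNReal.mul_lt_top ENNReal.ofReal_lt_top (Lp.eLpNorm_lt_top g)
  -- the linear map
  set Slin : Lp ℝ 2 μ →ₗ[ℝ] Lp ℝ 2 μ :=
    { toFun := fun g => (hmem g).toLp (opFun x αf ⇑g)
      map_add' := by
        intro g₁ g₂
        refine Lp.ext ?_
        have e1 : ⇑(g₁ + g₂) =ᵐ[μ] ⇑g₁ + ⇑g₂ := Lp.coeFn_add g₁ g₂
        have e2 : opFun x αf ⇑(g₁ + g₂) =ᵐ[μ] opFun x αf (⇑g₁ + ⇑g₂) :=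
          hcongr _ _ (Lp.aestronglyMeasurable _) e1
        calc ⇑((hmem (g₁ + g₂)).toLp (opFun x αf ⇑(g₁ + g₂)))
            =ᵐ[μ] opFun x αf ⇑(g₁ + g₂) := MemLp.coeFn_toLp _
          _ =ᵐ[μ] opFun x αf (⇑g₁ + ⇑g₂) := e2
          _ =ᵐ[μ] fun t => opFun x αf ⇑g₁ t + opFun x αf ⇑g₂ t := by
              rw [opFun_add]
          _ =ᵐ[μ] ⇑((hmem g₁).toLp _ + (hmem g₂).toLp _) := by
              filter_upwards [Lp.coeFn_add ((hmem g₁).toLp _) ((hmem g₂).toLp _),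
                MemLp.coeFn_toLp (hmem g₁), MemLp.coeFn_toLp (hmem g₂)] with t h1 h2 h3
              rw [h1]
              simp only [Pi.add_apply, h2, h3]
      map_smul' := by
        intro c g
        refine Lp.ext ?_
        have e1 : ⇑(c • g) =ᵐ[μ] c • ⇑g := Lp.coeFn_smul c g
        have e2 : opFun x αf ⇑(c • g) =ᵐ[μ] opFun x αf (c • ⇑g) :=
          hcongr _ _ (Lp.aestronglyMeasurable _) e1
        calc ⇑((hmem (c • g)).toLp (opFun x αf ⇑(c • g)))
            =ᵐ[μ] opFun x αf ⇑(c • g) := MemLp.coeFn_toLp _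
          _ =ᵐ[μ] opFun x αf (c • ⇑g) := e2
          _ =ᵐ[μ] fun t => c * opFun x αf ⇑g t := by rw [opFun_smul]
          _ =ᵐ[μ] ⇑(c • (hmem g).toLp _) := by
              filter_upwards [Lp.coeFn_smul c ((hmem g).toLp _),
                MemLp.coeFn_toLp (hmem g)] with t h1 h2
              rw [h1]
              simp only [Pi.smul_apply, smul_eq_mul, h2] } with hSlin
  have hbound : ∀ g : Lp ℝ 2 μ, ‖Slin g‖ ≤ Λ * ‖g‖ := by
    intro g
    have h1 : ‖Slin g‖ = (eLpNorm (opFun x αf ⇑g) 2 μ).toReal :=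
      Lp.norm_toLp _ (hmem g)
    rw [h1, Lp.norm_def]
    calc (eLpNorm (opFun x αf ⇑g) 2 μ).toReal
        ≤ (ENNReal.ofReal Λ * eLpNorm (⇑g) 2 μ).toReal := by
          refine ENNReal.toReal_mono ?_ (hkey _ (Lp.aestronglyMeasurable g))
          exact (ENNReal.mul_lt_top ENNReal.ofReal_lt_top (Lp.eLpNorm_lt_top g)).ne
      _ = Λ * (eLpNorm (⇑g) 2 μ).toReal := by
          rw [ENNReal.toReal_mul, ENNReal.toReal_ofReal hΛ0]
  refine ⟨Slin.mkContinuous Λ hbound, fun g => hbound g, ?_⟩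
  intro f g hsr
  refine Lp.ext ?_
  have hScoe : ⇑(Slin.mkContinuous Λ hbound g) =ᵐ[μ] opFun x αf ⇑g :=
    MemLp.coeFn_toLp (hmem g)
  have hmain : ∀ᵐ t ∂μ, g t = f t + opFun x αf (⇑g) t := by
    refine haecov fun n => ?_
    have h0 : (fun t => (⇑(0 : Lp ℝ 2 μ)) (Linv x n t))
        =ᵐ[μ.restrict (subInt x n)] (fun _ => (0 : ℝ)) := by
      have := (hqmp n).ae_eq (Lp.coeFn_zero ℝ 2 μ)
      filter_upwards [this] with t ht
      exact ht
    filter_upwards [ae_restrict_mem (measurableSet_subInt n),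
      ae_restrict_of_ae (hsr n), h0] with t ht heq h0t
    rw [heq ht, opFun_eq_on hx ht, h0t, sub_zero]
  filter_upwards [hmain, Lp.coeFn_add f (Slin.mkContinuous Λ hbound g), hScoe]
    with t h1 h2 h3
  rw [h1, h2]
  simp only [Pi.add_apply, h3]

end FCAux

open RealInnerProductSpace in
/-- If `(f m)` is a Bessel sequence in `L²(I)`, then so is
`(f m *_T 0)`. -/
theorem partial_convolution_null_base_bessel
    (N : ℕ) (hN : 2 ≤ N) (x : Fin (N + 1) → ℝ) (hx : StrictMono x)
    (μ : Measure ℝ) (hμ : μ = volume.restrict (Set.Icc (x 0) (x (Fin.last N))))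
    (α : Fin N → Lp ℝ ∞ μ)
    (Λ : ℝ) (hΛdef : Λ = ⨆ n : Fin N, ‖α n‖) (hΛ : Λ < 1)
    (P₂ : Lp ℝ 2 μ → Lp ℝ 2 μ)
    (hP₂ : ∀ f : Lp ℝ 2 μ, SelfRef μ x (fun n => ⇑(α n)) ⇑f ⇑(0 : Lp ℝ 2 μ) ⇑(P₂ f))
    (f : ℕ → Lp ℝ 2 μ)
    (B : ℝ) (hB : 0 < B)
    (hBessel : ∀ g : Lp ℝ 2 μ, ∀ s : Finset ℕ, ∑ m ∈ s, |⟪g, f m⟫|^2 ≤ B * ‖g‖^2) :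
    ∃ B' : ℝ, 0 < B' ∧
      ∀ g : Lp ℝ 2 μ, ∀ s : Finset ℕ, ∑ m ∈ s, |⟪g, P₂ (f m)⟫|^2 ≤ B' * ‖g‖^2 := by
  have hN0 : 0 < N := lt_of_lt_of_le two_pos hN
  have hbdd : BddAbove (Set.range fun n : Fin N => ‖α n‖) :=
    Set.Finite.bddAbove (Set.finite_range _)
  have hΛn : ∀ n : Fin N, ‖α n‖ ≤ Λ := fun n => hΛdef ▸ le_ciSup hbdd n
  have hΛ0 : 0 ≤ Λ := le_trans (norm_nonneg (α ⟨0, hN0⟩)) (hΛn ⟨0, hN0⟩)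
  obtain ⟨S, hSb, hSfix⟩ := FCAux.exists_S hN0 hx μ hμ α Λ hΛ0 hΛn
  have hSnorm : ‖S‖ ≤ Λ := S.opNorm_le_bound hΛ0 hSb
  have hSlt : ‖S‖ < 1 := lt_of_le_of_lt hSnorm hΛ
  set u : (Lp ℝ 2 μ →L[ℝ] Lp ℝ 2 μ)ˣ := Units.oneSub S hSlt with hu_def
  set T : Lp ℝ 2 μ →L[ℝ] Lp ℝ 2 μ := ↑u⁻¹ with hT_def
  have hu : ∀ y : Lp ℝ 2 μ, (↑u : Lp ℝ 2 μ →L[ℝ] Lp ℝ 2 μ) y = y - S y := by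
    intro y
    have : (↑u : Lp ℝ 2 μ →L[ℝ] Lp ℝ 2 μ) = 1 - S := rfl
    rw [this, ContinuousLinearMap.sub_apply, ContinuousLinearMap.one_apply]
  have hP : ∀ m : ℕ, P₂ (f m) = T (f m) := by
    intro m
    have hfix : P₂ (f m) = f m + S (P₂ (f m)) := hSfix (f m) (P₂ (f m)) (hP₂ (f m))
    have h1 : (↑u : Lp ℝ 2 μ →L[ℝ] Lp ℝ 2 μ) (P₂ (f m)) = f m := by
      rw [hu]
      exact sub_eq_iff_eq_add.2 hfix
    calc P₂ (f m)
        = T ((↑u : Lp ℝ 2 μ →L[ℝ] Lp ℝ 2 μ) (P₂ (f m))) := by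
          rw [hT_def, ← ContinuousLinearMap.mul_apply, Units.inv_mul,
            ContinuousLinearMap.one_apply]
      _ = T (f m) := by rw [h1]
  have h1Λ : 0 < 1 - Λ := by linarith
  have hT : ∀ y : Lp ℝ 2 μ, ‖T y‖ ≤ (1 - Λ)⁻¹ * ‖y‖ := by
    intro y
    have h1 : (↑u : Lp ℝ 2 μ →L[ℝ] Lp ℝ 2 μ) (T y) = y := by
      rw [hT_def, ← ContinuousLinearMap.mul_apply, Units.mul_inv,
        ContinuousLinearMap.one_apply]
    have h2 : T y - S (T y) = y := by rw [← hu]; exact h1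
    have h3 : ‖T y‖ ≤ ‖y‖ + Λ * ‖T y‖ := by
      calc ‖T y‖ = ‖(T y - S (T y)) + S (T y)‖ := by rw [sub_add_cancel]
        _ ≤ ‖T y - S (T y)‖ + ‖S (T y)‖ := norm_add_le _ _
        _ ≤ ‖y‖ + Λ * ‖T y‖ := by rw [h2]; exact add_le_add le_rfl (hSb _)
    rw [inv_mul_eq_div, le_div_iff₀ h1Λ]
    nlinarith [h3]
  set A : Lp ℝ 2 μ →L[ℝ] Lp ℝ 2 μ := ContinuousLinearMap.adjoint T with hA_def
  have hTnorm : ‖T‖ ≤ (1 - Λ)⁻¹ := T.opNorm_le_bound (by positivity) hT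
  have hAnorm : ‖A‖ = ‖T‖ := ContinuousLinearMap.adjoint.norm_map T
  have hA : ∀ g : Lp ℝ 2 μ, ‖A g‖ ≤ (1 - Λ)⁻¹ * ‖g‖ := by
    intro g
    calc ‖A g‖ ≤ ‖A‖ * ‖g‖ := A.le_opNorm g
      _ ≤ (1 - Λ)⁻¹ * ‖g‖ := by
          rw [hAnorm]
          exact mul_le_mul_of_nonneg_right hTnorm (norm_nonneg g)
  refine ⟨B / (1 - Λ) ^ 2, by positivity, ?_⟩
  intro g s
  have key : ∀ m : ℕ, ⟪g, P₂ (f m)⟫ = ⟪A g, f m⟫ := by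
    intro m
    rw [hP m, hA_def]
    exact (ContinuousLinearMap.adjoint_inner_left T (f m) g).symm
  calc ∑ m ∈ s, |⟪g, P₂ (f m)⟫| ^ 2
      = ∑ m ∈ s, |⟪A g, f m⟫| ^ 2 :=
        Finset.sum_congr rfl fun m _ => by rw [key m]
    _ ≤ B * ‖A g‖ ^ 2 := hBessel (A g) s
    _ ≤ B / (1 - Λ) ^ 2 * ‖g‖ ^ 2 := by
        have h2 : ‖A g‖ ^ 2 ≤ ((1 - Λ)⁻¹ * ‖g‖) ^ 2 :=
          pow_le_pow_left₀ (norm_nonneg _) (hA g) 2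
        calc B * ‖A g‖ ^ 2 ≤ B * ((1 - Λ)⁻¹ * ‖g‖) ^ 2 :=
              mul_le_mul_of_nonneg_left h2 hB.le
          _ = B / (1 - Λ) ^ 2 * ‖g‖ ^ 2 := by
              field_simp


end
end

section
/- Let p = 2 and let (f_m)_{m∈ℕ} be a Riesz sequence in L²(I), i.e., there exist constants 0 < c ≤ C such that for every finitely supported scalar sequence (a_m), c·∑_m |a_m|² ≤ ‖∑_m a_m f_m‖₂² ≤ C·∑_m |a_m|². Then (f_m *_T 0)_{m∈ℕ} is also a Riesz sequence in L²(I): there exist constants 0 < c' ≤ C' such that for every finitely supported scalar sequence (a_m), c'·∑_m |a_m|² ≤ ‖∑_m a_m (f_m *_T 0)‖₂² ≤ C'·∑_m |a_m|². -/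
open MeasureTheory ENNReal

noncomputable section

section AuxLemmas

variable {N : ℕ} {x : Fin (N + 1) → ℝ}

lemma dpos (hx : StrictMono x) (n : Fin N) : 0 < x n.succ - x n.castSucc :=
  sub_pos.mpr (hx (Fin.castSucc_lt_succ (i := n)))

lemma Dpos (hx : StrictMono x) (hN : 0 < N) : 0 < x (Fin.last N) - x 0 :=
  sub_pos.mpr (hx (by rw [Fin.lt_def]; simp [Fin.last]; omega))

lemma Linv_affine (hx : StrictMono x) (n : Fin N) (t : ℝ) :
    Linv x n t = ((x (Fin.last N) - x 0) / (x n.succ - x n.castSucc)) * t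
      + (x 0 - x n.castSucc * ((x (Fin.last N) - x 0) / (x n.succ - x n.castSucc))) := by
  have hd : x n.succ - x n.castSucc ≠ 0 := (dpos hx n).ne'
  unfold Linv; field_simp; ring

lemma measurable_Linv (n : Fin N) : Measurable (Linv x n) := by
  unfold Linv; fun_prop

lemma subInt_subset (n : Fin N) : subInt x n ⊆ Set.Icc (x n.castSucc) (x n.succ) := by
  unfold subInt; split
  · exact subset_rfl
  · exact Set.Ioc_subset_Icc_self

lemma measurableSet_subInt (n : Fin N) : MeasurableSet (subInt x n) := by
  unfold subInt; split
  · exact measurableSet_Icc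
  · exact measurableSet_Ioc

lemma subInt_subset_I (hx : StrictMono x) (n : Fin N) :
    subInt x n ⊆ Set.Icc (x 0) (x (Fin.last N)) :=
  (subInt_subset n).trans (Set.Icc_subset_Icc (hx.monotone (Fin.zero_le _))
    (hx.monotone (Fin.le_last _)))

lemma Linv_mem (hx : StrictMono x) (hN : 0 < N) (n : Fin N) {t : ℝ} (ht : t ∈ subInt x n) :
    Linv x n t ∈ Set.Icc (x 0) (x (Fin.last N)) := by
  obtain ⟨h1, h2⟩ := subInt_subset n ht
  have hd := dpos hx n
  have hD := Dpos hx hN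
  unfold Linv
  constructor
  · have : 0 ≤ (t - x n.castSucc) * (x (Fin.last N) - x 0) / (x n.succ - x n.castSucc) :=
      div_nonneg (mul_nonneg (by linarith) hD.le) hd.le
    linarith
  · have : (t - x n.castSucc) * (x (Fin.last N) - x 0) / (x n.succ - x n.castSucc)
        ≤ x (Fin.last N) - x 0 := by
      rw [div_le_iff₀ hd]
      nlinarith
    linarith

lemma map_Linv (hx : StrictMono x) (hN : 0 < N) (n : Fin N) :
    Measure.map (Linv x n) volume
      = ENNReal.ofReal ((x n.succ - x n.castSucc) / (x (Fin.last N) - x 0)) • volume := by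
  set r := (x (Fin.last N) - x 0) / (x n.succ - x n.castSucc) with hr
  set s0 := x 0 - x n.castSucc * r with hs0
  have hrpos : 0 < r := div_pos (Dpos hx hN) (dpos hx n)
  have heq : Linv x n = (fun u => u + s0) ∘ (fun t => r * t) := by
    funext t; simp [Function.comp, Linv_affine hx n t]; rfl
  rw [heq, ← Measure.map_map (measurable_add_const s0) (measurable_const_mul r),
    Real.map_volume_mul_left hrpos.ne', Measure.map_smul, map_add_right_eq_self]
  congr 1
  rw [abs_of_pos (inv_pos.mpr hrpos), hr, inv_div]
lemma ae_transfer (hx : StrictMono x) (hN : 0 < N) {μ : Measure ℝ}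
    (hμ : μ = volume.restrict (Set.Icc (x 0) (x (Fin.last N)))) (n : Fin N)
    {P : ℝ → Prop} (hP : ∀ᵐ y ∂μ, P y) :
    ∀ᵐ t ∂μ, t ∈ subInt x n → P (Linv x n t) := by
  subst hμ
  apply ae_restrict_of_ae
  rw [ae_restrict_iff' measurableSet_Icc] at hP
  rw [Filter.eventually_iff, mem_ae_iff] at hP
  obtain ⟨B, hEB, hBm, hB0⟩ := exists_measurable_superset_of_null hP
  have hpre : volume (Linv x n ⁻¹' B) = 0 := by
    have h1 : Measure.map (Linv x n) volume B = volume (Linv x n ⁻¹' B) :=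
      Measure.map_apply (measurable_Linv n) hBm
    rw [map_Linv hx hN n] at h1
    simp only [Measure.smul_apply, smul_eq_mul, hB0, mul_zero] at h1
    exact h1.symm
  filter_upwards [(measure_eq_zero_iff_ae_notMem).mp hpre] with t ht htm
  have h2 : Linv x n t ∈ {y | (y ∈ Set.Icc (x 0) (x (Fin.last N)) → P y)} := by
    by_contra h3
    exact ht (hEB h3)
  exact h2 (Linv_mem hx hN n htm)

lemma lintegral_comp_Linv (hx : StrictMono x) (hN : 0 < N) (n : Fin N)
    {F : ℝ → ℝ≥0∞} (hF : Measurable F) :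
    ∫⁻ t in subInt x n, F (Linv x n t) ≤
      ENNReal.ofReal ((x n.succ - x n.castSucc) / (x (Fin.last N) - x 0)) *
        ∫⁻ y in Set.Icc (x 0) (x (Fin.last N)), F y := by
  have hsub : subInt x n ⊆ Linv x n ⁻¹' Set.Icc (x 0) (x (Fin.last N)) :=
    fun t ht => Linv_mem hx hN n ht
  calc ∫⁻ t in subInt x n, F (Linv x n t)
      ≤ ∫⁻ t in Linv x n ⁻¹' Set.Icc (x 0) (x (Fin.last N)), F (Linv x n t) :=
        lintegral_mono' (Measure.restrict_mono hsub le_rfl) le_rfl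
    _ = ∫⁻ y, F y ∂(Measure.map (Linv x n) (volume.restrict (Linv x n ⁻¹' Set.Icc (x 0) (x (Fin.last N))))) :=
        (lintegral_map hF (measurable_Linv n)).symm
    _ = ∫⁻ y in Set.Icc (x 0) (x (Fin.last N)), F y ∂(Measure.map (Linv x n) volume) := by
        rw [Measure.restrict_map (measurable_Linv n) measurableSet_Icc]
    _ = ENNReal.ofReal ((x n.succ - x n.castSucc) / (x (Fin.last N) - x 0)) *
        ∫⁻ y in Set.Icc (x 0) (x (Fin.last N)), F y := by
        rw [map_Linv hx hN n, Measure.restrict_smul, lintegral_smul_measure, smul_eq_mul]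
lemma subInt_disjoint (hx : StrictMono x) : Pairwise (Function.onFun Disjoint (subInt x)) := by
  have key : ∀ m n : Fin N, m < n → Disjoint (subInt x m) (subInt x n) := by
    intro m n h
    rw [Set.disjoint_left]
    intro t htm htn
    have h1 : t ≤ x m.succ := (subInt_subset m htm).2
    have hn0 : n.val ≠ 0 := by
      have := h
      rw [Fin.lt_def] at this
      omega
    have h2 : x n.castSucc < t := by
      have : subInt x n = Set.Ioc (x n.castSucc) (x n.succ) := if_neg hn0
      rw [this] at htn
      exact htn.1
    have h3 : x m.succ ≤ x n.castSucc := by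
      apply hx.monotone
      rw [Fin.le_def]
      simp only [Fin.val_succ, Fin.coe_castSucc]
      rw [Fin.lt_def] at h
      omega
    linarith
  intro m n hmn
  rcases lt_or_gt_of_ne hmn with h | h
  · exact key _ _ h
  · exact (key _ _ h).symm

lemma iUnion_subInt (hx : StrictMono x) (hN : 0 < N) :
    ⋃ n : Fin N, subInt x n = Set.Icc (x 0) (x (Fin.last N)) := by
  apply Set.Subset.antisymm
  · exact Set.iUnion_subset fun n => subInt_subset_I hx n
  · have key : ∀ k : ℕ, ∀ hk : k < N, ∀ t, t ∈ Set.Icc (x 0) (x ⟨k + 1, by omega⟩) →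
        ∃ n : Fin N, t ∈ subInt x n := by
      intro k
      induction k with
      | zero =>
        intro hk t ht
        refine ⟨⟨0, hk⟩, ?_⟩
        have : subInt x ⟨0, hk⟩ = Set.Icc (x ⟨0, by omega⟩) (x ⟨1, by omega⟩) := by
          simp [subInt, Fin.castSucc_mk, Fin.succ_mk]
        rw [this]
        have h0 : (⟨0, by omega⟩ : Fin (N + 1)) = 0 := rfl
        rw [h0]
        exact ht
      | succ k ih =>
        intro hk t ht
        by_cases h : t ≤ x ⟨k + 1, by omega⟩
        · exact ih (by omega) t ⟨ht.1, h⟩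
        · refine ⟨⟨k + 1, hk⟩, ?_⟩
          have : subInt x ⟨k + 1, hk⟩ = Set.Ioc (x ⟨k + 1, by omega⟩) (x ⟨k + 2, by omega⟩) := by
            simp [subInt, Fin.castSucc_mk, Fin.succ_mk]
          rw [this]
          exact ⟨lt_of_not_ge h, ht.2⟩
    intro t ht
    have hlast : x (Fin.last N) = x ⟨N - 1 + 1, by omega⟩ := by
      congr 1
      rw [Fin.ext_iff]
      simp [Fin.last]
      omega
    rw [hlast] at ht
    obtain ⟨n, hn⟩ := key (N - 1) (by omega) t ht
    exact Set.mem_iUnion.mpr ⟨n, hn⟩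

lemma sum_ratio_one (hx : StrictMono x) (hN : 0 < N) :
    ∑ n : Fin N, ENNReal.ofReal ((x n.succ - x n.castSucc) / (x (Fin.last N) - x 0)) = 1 := by
  have hD : 0 < x (Fin.last N) - x 0 := by
    apply sub_pos.mpr; apply hx; rw [Fin.lt_def]; simp [Fin.last]; omega
  have hnonneg : ∀ n ∈ (Finset.univ : Finset (Fin N)), 0 ≤ (x n.succ - x n.castSucc) / (x (Fin.last N) - x 0) :=
    fun n _ => div_nonneg (by
      have : x n.castSucc < x n.succ := hx (Fin.castSucc_lt_succ (i := n))
      linarith) hD.le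
  rw [← ENNReal.ofReal_sum_of_nonneg hnonneg]
  have hsum : ∑ n : Fin N, (x n.succ - x n.castSucc) / (x (Fin.last N) - x 0)
      = (∑ n : Fin N, (x n.succ - x n.castSucc)) / (x (Fin.last N) - x 0) := by
    rw [Finset.sum_div]
  rw [hsum]
  have htel : ∑ n : Fin N, (x n.succ - x n.castSucc) = x (Fin.last N) - x 0 := by
    set y : ℕ → ℝ := fun i => if h : i ≤ N then x ⟨i, by omega⟩ else x (Fin.last N) with hy
    have h1 : ∀ n : Fin N, x n.succ - x n.castSucc = y (n.val + 1) - y n.val := by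
      intro n
      have hn1 : n.val + 1 ≤ N := n.isLt
      have hn2 : n.val ≤ N := by omega
      simp only [hy, dif_pos hn1, dif_pos hn2]
      congr 1
    calc ∑ n : Fin N, (x n.succ - x n.castSucc) = ∑ n : Fin N, (y (n.val + 1) - y n.val) := by
          exact Finset.sum_congr rfl fun n _ => h1 n
      _ = ∑ i ∈ Finset.range N, (y (i + 1) - y i) := Fin.sum_univ_eq_sum_range (fun i => y (i + 1) - y i) N
      _ = y N - y 0 := Finset.sum_range_sub y N
      _ = x (Fin.last N) - x 0 := by
          simp only [hy, dif_pos (le_refl N), dif_pos (Nat.zero_le N)]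
          congr 1
  rw [htel, div_self hD.ne']
  exact ENNReal.ofReal_one
lemma contract (hx : StrictMono x) (hN : 0 < N) {μ : Measure ℝ}
    (hμ : μ = volume.restrict (Set.Icc (x 0) (x (Fin.last N))))
    {α : Fin N → ℝ → ℝ} {Λ : ℝ} (hΛ0 : 0 ≤ Λ)
    (hα : ∀ n : Fin N, ∀ᵐ y ∂μ, |α n y| ≤ Λ)
    (g h : Lp ℝ 2 μ)
    (hrel : ∀ n : Fin N, ∀ᵐ t ∂μ, t ∈ subInt x n →
      h t = α n (Linv x n t) * g (Linv x n t)) :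
    ‖h‖ ≤ Λ * ‖g‖ := by
  have hgm := Lp.aestronglyMeasurable g
  set G := hgm.mk ⇑g with hGdef
  have hG : Measurable G := hgm.stronglyMeasurable_mk.measurable
  have hg : ∀ᵐ y ∂μ, g y = G y := hgm.ae_eq_mk
  set F : ℝ → ℝ≥0∞ := fun y => (‖G y‖₊ : ℝ≥0∞) ^ 2 with hFdef
  have hF : Measurable F := (hG.nnnorm.coe_nnreal_ennreal).pow_const 2
  set J : ℝ≥0∞ := ∫⁻ y in Set.Icc (x 0) (x (Fin.last N)), F y with hJdef
  have hJ : ∫⁻ y, (‖g y‖₊ : ℝ≥0∞) ^ 2 ∂μ = J := by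
    rw [hJdef, ← hμ]
    apply lintegral_congr_ae
    filter_upwards [hg] with y hy
    rw [hFdef, hy]
  have hn : ∀ n : Fin N, ∫⁻ t in subInt x n, (‖h t‖₊ : ℝ≥0∞) ^ 2 ∂volume ≤
      (ENNReal.ofReal Λ) ^ 2 *
        (ENNReal.ofReal ((x n.succ - x n.castSucc) / (x (Fin.last N) - x 0)) * J) := by
    intro n
    have hb : ∀ᵐ t ∂(volume.restrict (subInt x n)),
        (‖h t‖₊ : ℝ≥0∞) ^ 2 ≤ (ENNReal.ofReal Λ) ^ 2 * F (Linv x n t) := by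
      have e4 : ∀ᵐ t ∂μ, t ∈ subInt x n →
          (‖h t‖₊ : ℝ≥0∞) ^ 2 ≤ (ENNReal.ofReal Λ) ^ 2 * F (Linv x n t) := by
        filter_upwards [hrel n, ae_transfer hx hN hμ n (hα n), ae_transfer hx hN hμ n hg]
          with t h1 h2 h3 htm
        rw [h1 htm, h3 htm, hFdef]
        have : (‖α n (Linv x n t) * G (Linv x n t)‖₊ : ℝ≥0∞)
            ≤ ENNReal.ofReal Λ * (‖G (Linv x n t)‖₊ : ℝ≥0∞) := by
          rw [← enorm_eq_nnnorm, Real.enorm_eq_ofReal_abs, abs_mul, ENNReal.ofReal_mul (abs_nonneg _),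
            ← enorm_eq_nnnorm, Real.enorm_eq_ofReal_abs]
          exact mul_le_mul_left (ENNReal.ofReal_le_ofReal (h2 htm)) _
        calc (‖α n (Linv x n t) * G (Linv x n t)‖₊ : ℝ≥0∞) ^ 2
            ≤ (ENNReal.ofReal Λ * (‖G (Linv x n t)‖₊ : ℝ≥0∞)) ^ 2 := pow_le_pow_left' this 2
          _ = (ENNReal.ofReal Λ) ^ 2 * (‖G (Linv x n t)‖₊ : ℝ≥0∞) ^ 2 := mul_pow _ _ 2
      have hle : volume.restrict (subInt x n) ≤ μ := by
        rw [hμ]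
        exact Measure.restrict_mono (subInt_subset_I hx n) le_rfl
      filter_upwards [e4.filter_mono (ae_mono hle),
        ae_restrict_mem (measurableSet_subInt n)] with t h4 htm
      exact h4 htm
    calc ∫⁻ t in subInt x n, (‖h t‖₊ : ℝ≥0∞) ^ 2 ∂volume
        ≤ ∫⁻ t in subInt x n, (ENNReal.ofReal Λ) ^ 2 * F (Linv x n t) ∂volume :=
          lintegral_mono_ae hb
      _ = (ENNReal.ofReal Λ) ^ 2 * ∫⁻ t in subInt x n, F (Linv x n t) ∂volume :=
          lintegral_const_mul' _ _ (by exact ENNReal.pow_ne_top ENNReal.ofReal_ne_top)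
      _ ≤ (ENNReal.ofReal Λ) ^ 2 *
            (ENNReal.ofReal ((x n.succ - x n.castSucc) / (x (Fin.last N) - x 0)) * J) :=
          mul_le_mul_right (lintegral_comp_Linv hx hN n hF) _
  have key : ∫⁻ t, (‖h t‖₊ : ℝ≥0∞) ^ 2 ∂μ ≤
      (ENNReal.ofReal Λ) ^ 2 * ∫⁻ y, (‖g y‖₊ : ℝ≥0∞) ^ 2 ∂μ := by
    rw [hJ]
    have hμsum : μ = Measure.sum (fun n : Fin N => volume.restrict (subInt x n)) := by
      rw [hμ, ← iUnion_subInt hx hN]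
      exact Measure.restrict_iUnion (subInt_disjoint hx) (fun n => measurableSet_subInt n)
    have step1 := lintegral_sum_measure (fun t => (‖h t‖₊ : ℝ≥0∞) ^ 2)
      (fun n : Fin N => volume.restrict (subInt x n))
    rw [← hμsum, tsum_fintype] at step1
    rw [step1]
    calc ∑ n : Fin N, ∫⁻ t in subInt x n, (‖h t‖₊ : ℝ≥0∞) ^ 2 ∂volume
        ≤ ∑ n : Fin N, (ENNReal.ofReal Λ) ^ 2 *
            (ENNReal.ofReal ((x n.succ - x n.castSucc) / (x (Fin.last N) - x 0)) * J) :=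
          Finset.sum_le_sum fun n _ => hn n
      _ = (ENNReal.ofReal Λ) ^ 2 *
            ((∑ n : Fin N, ENNReal.ofReal ((x n.succ - x n.castSucc) / (x (Fin.last N) - x 0))) * J) := by
          rw [← Finset.mul_sum, ← Finset.sum_mul]
      _ = (ENNReal.ofReal Λ) ^ 2 * J := by rw [sum_ratio_one hx hN, one_mul]
  have hr2 : ∀ a : ℝ≥0∞, a ^ (2 : ℝ) = a ^ (2 : ℕ) := fun a => by
    rw [← ENNReal.rpow_natCast]; norm_num
  have h2 : eLpNorm (⇑h) 2 μ ≤ ENNReal.ofReal Λ * eLpNorm (⇑g) 2 μ := by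
    rw [eLpNorm_eq_lintegral_rpow_enorm_toReal two_ne_zero ENNReal.ofNat_ne_top,
      eLpNorm_eq_lintegral_rpow_enorm_toReal two_ne_zero ENNReal.ofNat_ne_top]
    simp only [ENNReal.toReal_ofNat]
    calc (∫⁻ t, (‖h t‖₊ : ℝ≥0∞) ^ (2 : ℝ) ∂μ) ^ (1 / (2 : ℝ))
        ≤ ((ENNReal.ofReal Λ) ^ (2 : ℕ) * ∫⁻ y, (‖g y‖₊ : ℝ≥0∞) ^ (2 : ℝ) ∂μ) ^ (1 / (2 : ℝ)) := by
          apply ENNReal.rpow_le_rpow _ (by norm_num)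
          simpa only [hr2] using key
      _ = ENNReal.ofReal Λ * (∫⁻ y, (‖g y‖₊ : ℝ≥0∞) ^ (2 : ℝ) ∂μ) ^ (1 / (2 : ℝ)) := by
          rw [ENNReal.mul_rpow_of_nonneg _ _ (by norm_num : (0:ℝ) ≤ 1 / 2)]
          congr 1
          rw [← ENNReal.rpow_natCast (ENNReal.ofReal Λ) 2, ← ENNReal.rpow_mul]
          norm_num
  rw [Lp.norm_def, Lp.norm_def]
  calc (eLpNorm (⇑h) 2 μ).toReal ≤ (ENNReal.ofReal Λ * eLpNorm (⇑g) 2 μ).toReal :=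
        ENNReal.toReal_mono (ENNReal.mul_ne_top ENNReal.ofReal_ne_top (Lp.eLpNorm_ne_top g)) h2
    _ = Λ * (eLpNorm (⇑g) 2 μ).toReal := by
        rw [ENNReal.toReal_mul, ENNReal.toReal_ofReal hΛ0]
end AuxLemmas

lemma linf_ae_bound {μ : Measure ℝ} (a : Lp ℝ ∞ μ) : ∀ᵐ y ∂μ, |a y| ≤ ‖a‖ := by
  have h1 : ∀ᵐ y ∂μ, (‖a y‖₊ : ℝ≥0∞) ≤ eLpNormEssSup (⇑a) μ := ae_le_eLpNormEssSup
  have hne : eLpNormEssSup (⇑a) μ ≠ ∞ := by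
    rw [← eLpNorm_exponent_top]; exact Lp.eLpNorm_ne_top a
  have hnorm : ‖a‖ = (eLpNormEssSup (⇑a) μ).toReal := by
    rw [Lp.norm_def, eLpNorm_exponent_top]
  rw [hnorm]
  filter_upwards [h1] with y hy
  have := ENNReal.toReal_mono hne hy
  simpa [Real.norm_eq_abs] using this

lemma coeFn_sum_smul {μ : Measure ℝ} (s : Finset ℕ) (a : ℕ → ℝ) (g : ℕ → Lp ℝ 2 μ) :
    ⇑(∑ m ∈ s, a m • g m) =ᵐ[μ] fun t => ∑ m ∈ s, a m * (g m) t := by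
  induction s using Finset.induction with
  | empty =>
    simp only [Finset.sum_empty]
    filter_upwards [Lp.coeFn_zero ℝ 2 μ] with t ht
    simpa using ht
  | insert m s' hm ih =>
    rw [Finset.sum_insert hm]
    filter_upwards [Lp.coeFn_add (a m • g m) (∑ k ∈ s', a k • g k),
      Lp.coeFn_smul (a m) (g m), ih] with t h1 h2 h3
    rw [Finset.sum_insert hm]
    simp only [Pi.add_apply] at h1
    rw [h1, h2, h3]
    simp
/-- If `(f m)` is a Riesz sequence in `L²(I)`, then so is
`(f m *_T 0)`. -/
theorem partial_convolution_null_base_riesz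
    (N : ℕ) (hN : 2 ≤ N) (x : Fin (N + 1) → ℝ) (hx : StrictMono x)
    (μ : Measure ℝ) (hμ : μ = volume.restrict (Set.Icc (x 0) (x (Fin.last N))))
    (α : Fin N → Lp ℝ ∞ μ)
    (Λ : ℝ) (hΛdef : Λ = ⨆ n : Fin N, ‖α n‖) (hΛ : Λ < 1)
    (P₂ : Lp ℝ 2 μ → Lp ℝ 2 μ)
    (hP₂ : ∀ f : Lp ℝ 2 μ, SelfRef μ x (fun n => ⇑(α n)) ⇑f ⇑(0 : Lp ℝ 2 μ) ⇑(P₂ f))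
    (f : ℕ → Lp ℝ 2 μ)
    (c C : ℝ) (hc : 0 < c) (hcC : c ≤ C)
    (hRiesz : ∀ (s : Finset ℕ) (a : ℕ → ℝ),
      c * ∑ m ∈ s, (a m)^2 ≤ ‖∑ m ∈ s, a m • f m‖^2 ∧
      ‖∑ m ∈ s, a m • f m‖^2 ≤ C * ∑ m ∈ s, (a m)^2) :
    ∃ c' C' : ℝ, 0 < c' ∧ c' ≤ C' ∧
      ∀ (s : Finset ℕ) (a : ℕ → ℝ),
        c' * ∑ m ∈ s, (a m)^2 ≤ ‖∑ m ∈ s, a m • P₂ (f m)‖^2 ∧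
        ‖∑ m ∈ s, a m • P₂ (f m)‖^2 ≤ C' * ∑ m ∈ s, (a m)^2 := by
  have hN0 : 0 < N := by omega
  have hbdd : ∀ n : Fin N, ‖α n‖ ≤ Λ := by
    intro n; rw [hΛdef]
    exact le_ciSup (f := fun n : Fin N => ‖α n‖) (Set.Finite.bddAbove (Set.finite_range _)) n
  have hΛ0 : 0 ≤ Λ := le_trans (norm_nonneg (α ⟨0, hN0⟩)) (hbdd ⟨0, hN0⟩)
  have hα : ∀ n : Fin N, ∀ᵐ y ∂μ, |(α n) y| ≤ Λ := fun n => by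
    filter_upwards [linf_ae_bound (α n)] with y hy
    exact hy.trans (hbdd n)
  have h1Λ : 0 < 1 - Λ := by linarith
  have h1Λ' : 0 < 1 + Λ := by linarith
  have hzero : ∀ n : Fin N, ∀ᵐ t ∂μ, t ∈ subInt x n → (0 : Lp ℝ 2 μ) (Linv x n t) = 0 :=
    fun n => ae_transfer hx hN0 hμ n (by
      filter_upwards [Lp.coeFn_zero ℝ 2 μ] with y hy; simpa using hy)
  have hup : ∀ F : Lp ℝ 2 μ, ‖P₂ F - F‖ ≤ Λ * ‖P₂ F‖ := by
    intro F
    apply contract hx hN0 hμ hΛ0 hα (P₂ F) (P₂ F - F)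
    intro n
    filter_upwards [hP₂ F n, hzero n, Lp.coeFn_sub (P₂ F) F] with t h1 h2 h3 htm
    have h4 := h1 htm
    rw [h2 htm] at h4
    have h5 : (P₂ F - F) t = (P₂ F) t - F t := by rw [h3]; simp
    rw [h5, h4]; ring
  have norm_up : ∀ F : Lp ℝ 2 μ, (1 - Λ) * ‖P₂ F‖ ≤ ‖F‖ := by
    intro F
    have h1 : ‖P₂ F‖ ≤ ‖F‖ + ‖P₂ F - F‖ := by
      calc ‖P₂ F‖ = ‖F + (P₂ F - F)‖ := by rw [add_sub_cancel]
        _ ≤ ‖F‖ + ‖P₂ F - F‖ := norm_add_le _ _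
    have h2 := hup F
    linarith
  have norm_low : ∀ F : Lp ℝ 2 μ, ‖F‖ ≤ (1 + Λ) * ‖P₂ F‖ := by
    intro F
    have h1 : ‖F‖ ≤ ‖P₂ F‖ + ‖P₂ F - F‖ := by
      calc ‖F‖ = ‖P₂ F - (P₂ F - F)‖ := by rw [_root_.sub_sub_cancel]
        _ ≤ ‖P₂ F‖ + ‖P₂ F - F‖ := norm_sub_le _ _
    have h2 := hup F
    linarith
  have hlin : ∀ (s : Finset ℕ) (a : ℕ → ℝ),
      P₂ (∑ m ∈ s, a m • f m) = ∑ m ∈ s, a m • P₂ (f m) := by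
    intro s a
    set Fs := ∑ m ∈ s, a m • f m with hFs
    set Ss := ∑ m ∈ s, a m • P₂ (f m) with hSs
    have hd : ‖P₂ Fs - Ss‖ ≤ Λ * ‖P₂ Fs - Ss‖ := by
      apply contract hx hN0 hμ hΛ0 hα (P₂ Fs - Ss) (P₂ Fs - Ss)
      intro n
      have hallm : ∀ᵐ t ∂μ, ∀ m ∈ s, (t ∈ subInt x n →
          (P₂ (f m)) t = (f m) t + (α n) (Linv x n t) *
            ((P₂ (f m)) (Linv x n t) - (0 : Lp ℝ 2 μ) (Linv x n t))) :=
        (ae_ball_iff s.countable_toSet).mpr fun m _ => hP₂ (f m) n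
      filter_upwards [hP₂ Fs n, hallm, coeFn_sum_smul s a f,
        coeFn_sum_smul s a (fun m => P₂ (f m)), Lp.coeFn_sub (P₂ Fs) Ss,
        ae_transfer hx hN0 hμ n (coeFn_sum_smul s a (fun m => P₂ (f m))),
        ae_transfer hx hN0 hμ n (Lp.coeFn_sub (P₂ Fs) Ss), hzero n]
        with t e1 e2 e3 e4 e5 e6 e7 e8
      intro htm
      have hz : (0 : Lp ℝ 2 μ) (Linv x n t) = 0 := e8 htm
      have hFt : Fs t = ∑ m ∈ s, a m * (f m) t := e3
      have hSt : Ss t = ∑ m ∈ s, a m * (P₂ (f m)) t := e4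
      have hSL : Ss (Linv x n t) = ∑ m ∈ s, a m * (P₂ (f m)) (Linv x n t) := e6 htm
      have hPF : (P₂ Fs) t = Fs t + (α n) (Linv x n t) *
          ((P₂ Fs) (Linv x n t) - (0 : Lp ℝ 2 μ) (Linv x n t)) := e1 htm
      have hsum : Ss t = Fs t + (α n) (Linv x n t) * Ss (Linv x n t) := by
        rw [hSt, hFt, hSL, Finset.mul_sum, ← Finset.sum_add_distrib]
        apply Finset.sum_congr rfl
        intro m hm
        rw [e2 m hm htm, hz]
        ring
      have e5t : (P₂ Fs - Ss) t = (P₂ Fs) t - Ss t := by rw [e5]; simp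
      have e7t : (P₂ Fs - Ss) (Linv x n t) = (P₂ Fs) (Linv x n t) - Ss (Linv x n t) := by
        rw [e7 htm]; simp
      rw [e5t, e7t, hPF, hz, hsum]
      ring
    have hd0 : ‖P₂ Fs - Ss‖ = 0 := by
      nlinarith [norm_nonneg (P₂ Fs - Ss)]
    exact sub_eq_zero.mp (norm_eq_zero.mp hd0)
  refine ⟨c / (1 + Λ) ^ 2, C / (1 - Λ) ^ 2, by positivity, ?_, ?_⟩
  · rw [div_le_div_iff₀ (by positivity) (by positivity)]
    have hsq : (1 - Λ) ^ 2 ≤ (1 + Λ) ^ 2 := by nlinarith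
    nlinarith
  · intro s a
    obtain ⟨hr1, hr2⟩ := hRiesz s a
    rw [← hlin s a]
    set F := ∑ m ∈ s, a m • f m with hF
    have hu := norm_up F
    have hl := norm_low F
    have hnn : 0 ≤ ‖P₂ F‖ := norm_nonneg _
    have hnF : 0 ≤ ‖F‖ := norm_nonneg _
    constructor
    · have h2 : ‖F‖ ^ 2 ≤ (1 + Λ) ^ 2 * ‖P₂ F‖ ^ 2 := by nlinarith [mul_le_mul hl hl hnF (by positivity : (0:ℝ) ≤ (1 + Λ) * ‖P₂ F‖)]
      rw [div_mul_eq_mul_div, div_le_iff₀ (by positivity)]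
      nlinarith
    · have h2 : (1 - Λ) ^ 2 * ‖P₂ F‖ ^ 2 ≤ ‖F‖ ^ 2 := by nlinarith [mul_le_mul hu hu (by positivity : (0:ℝ) ≤ (1 - Λ) * ‖P₂ F‖) hnF]
      rw [div_mul_eq_mul_div, le_div_iff₀ (by positivity)]
      nlinarith

end
end
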